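/- Let V be a 2×2 real orthogonal matrix and let D = 1 + V. Then (-1)^ν = det V, where ν is the dimension of the kernel of the linear map ℝ² → ℝ² induced by D. -/

import Mathlib

open Matrix

set_option maxHeartbeats 1600000 in
theorem stmt_4 (V : Matrix (Fin 2) (Fin 2) ℝ) (hV : Vᵀ * V = 1 ∧ V * Vᵀ = 1)
    (D : Matrix (Fin 2) (Fin 2) ℝ) (hD : D = 1 + V) :
    (-1 : ℝ) ^ (Module.finrank ℝ (LinearMap.ker D.mulVecLin)) = V.det := by
  obtain ⟨h1, h2⟩ := hV
  set a := V 0 0 with ha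
  set b := V 0 1 with hb
  set c := V 1 0 with hc
  set d := V 1 1 with hdd
  have e00 := congrFun (congrFun h1 0) 0
  have e01 := congrFun (congrFun h1 0) 1
  have e11 := congrFun (congrFun h1 1) 1
  have f00 := congrFun (congrFun h2 0) 0
  have f01 := congrFun (congrFun h2 0) 1
  have f11 := congrFun (congrFun h2 1) 1
  simp [Matrix.mul_apply, Fin.sum_univ_two, Matrix.one_apply, ← ha, ← hb, ← hc, ← hdd] at e00 e01 e11 f00 f01 f11
  have hdet2 : V.det = a * d - b * c := by
    rw [Matrix.det_fin_two]
  have hsq : V.det = 1 ∨ V.det = -1 := by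
    apply mul_self_eq_one_iff.mp
    have := congrArg Matrix.det h1
    simpa [Matrix.det_mul, Matrix.det_transpose, ← sq] using this
  have hDe : D = !![1 + a, b; c, 1 + d] := by
    ext i j
    fin_cases i <;> fin_cases j <;> simp [hD, Matrix.one_apply] <;> rfl
  rcases hsq with h | h
  · -- rotation case
    rw [hdet2] at h
    have hda : d = a := by nlinarith [sq_nonneg (d - a), sq_nonneg (b + c)]
    have hbc : b = -c := by nlinarith [sq_nonneg (d - a), sq_nonneg (b + c)]
    rw [hdet2, h]
    by_cases h0 : 1 + a = 0 ∧ c = 0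
    · have hDz : D = 0 := by
        rw [hDe]
        ext i j
        fin_cases i <;> fin_cases j <;> simp <;> linarith [h0.1, h0.2]
      rw [hDz]
      rw [Matrix.mulVecLin_zero, LinearMap.ker_zero, finrank_top, Module.finrank_fin_fun]
      norm_num
    · have hdetD : D.det ≠ 0 := by
        rw [hDe, Matrix.det_fin_two_of]
        intro hcon
        apply h0
        rw [hda, hbc] at hcon
        constructor <;> nlinarith [sq_nonneg (1 + a), sq_nonneg c]
      have hker : LinearMap.ker D.mulVecLin = ⊥ := by
        rw [LinearMap.ker_eq_bot, Matrix.coe_mulVecLin]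
        exact Matrix.mulVec_injective_iff_isUnit.mpr
          ((Matrix.isUnit_iff_isUnit_det D).mpr (isUnit_iff_ne_zero.mpr hdetD))
      rw [hker, finrank_bot]
      norm_num
  · -- reflection case
    rw [hdet2] at h
    have hda : d = -a := by nlinarith [sq_nonneg (d + a), sq_nonneg (b - c)]
    have hbc : b = c := by nlinarith [sq_nonneg (d + a), sq_nonneg (b - c)]
    rw [hdet2, h]
    have hnu : Module.finrank ℝ (LinearMap.ker D.mulVecLin) = 1 := by
      have hrn := LinearMap.finrank_range_add_finrank_ker D.mulVecLin
      rw [Module.finrank_fin_fun] at hrn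
      have hkerpos : 0 < Module.finrank ℝ (LinearMap.ker D.mulVecLin) := by
        rw [Module.finrank_pos_iff]
        by_cases hA : a = -1
        · refine ⟨⟨⟨![1 - a, -c], ?_⟩, 0, ?_⟩⟩
          · rw [LinearMap.mem_ker, Matrix.mulVecLin_apply, hDe]
            funext i
            fin_cases i <;>
              simp [Matrix.mulVec, dotProduct, Fin.sum_univ_two, hda, hbc] <;> nlinarith
          · intro hcon
            simp only [Submodule.mk_eq_zero] at hcon
            have := congrFun hcon 0
            simp [hA] at this
        · refine ⟨⟨⟨![c, -(1 + a)], ?_⟩, 0, ?_⟩⟩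
          · rw [LinearMap.mem_ker, Matrix.mulVecLin_apply, hDe]
            funext i
            fin_cases i <;>
              simp [Matrix.mulVec, dotProduct, Fin.sum_univ_two, hda, hbc] <;> nlinarith
          · intro hcon
            simp only [Submodule.mk_eq_zero] at hcon
            have := congrFun hcon 1
            simp at this
            apply hA; linarith
      have hrangepos : 0 < Module.finrank ℝ (LinearMap.range D.mulVecLin) := by
        rw [Module.finrank_pos_iff]
        by_cases hA : a = -1
        · refine ⟨⟨⟨D.mulVecLin ![0, 1], ⟨![0, 1], rfl⟩⟩, 0, ?_⟩⟩
          intro hcon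
          have hcon' : D.mulVecLin ![0, 1] = (0 : Fin 2 → ℝ) := congrArg Subtype.val hcon
          rw [Matrix.mulVecLin_apply, hDe] at hcon'
          have := congrFun hcon' 1
          simp [Matrix.mulVec, dotProduct, Fin.sum_univ_two, hda, hA] at this
        · refine ⟨⟨⟨D.mulVecLin ![1, 0], ⟨![1, 0], rfl⟩⟩, 0, ?_⟩⟩
          intro hcon
          have hcon' : D.mulVecLin ![1, 0] = (0 : Fin 2 → ℝ) := congrArg Subtype.val hcon
          rw [Matrix.mulVecLin_apply, hDe] at hcon'
          have := congrFun hcon' 0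
          simp [Matrix.mulVec, dotProduct, Fin.sum_univ_two] at this
          apply hA; linarith
      omega
    rw [hnu]
    norm_num
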